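/- (Personalized PageRank can be solved via the generalized Bellman–Ford algorithm.) Define P : Matrix V V ℝ≥0∞ by P x y := α * w x y / (∑_{y' : V} w x y'), and let H_t be the generalized Bellman–Ford iterates for the matrix P. Then for all vertices u, v : V, ⨆_{t : ℕ} (H_t u v) = (if u = v then 1 else 0) + ∑'_{t : ℕ} ((P^(t+1)) u v). -/
import Mathlib


open ENNReal

/-- The generalized Bellman–Ford iterates for a weight matrix `A`:
`H 0 = 1` (identity matrix) and `H (t+1) = H t * A + 1`. -/
noncomputable def bellmanFord {V : Type*} [Fintype V] [DecidableEq V]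
    (A : Matrix V V ℝ≥0∞) : ℕ → Matrix V V ℝ≥0∞
  | 0 => 1
  | t + 1 => bellmanFord A t * A + 1

/-- The damped random-walk matrix of personalized PageRank:
`P x y = α * w x y / ∑_{y'} w x y'`. -/
noncomputable def pprMatrix {V : Type*} [Fintype V] (w : Matrix V V ℝ≥0∞) (α : ℝ≥0∞) :
    Matrix V V ℝ≥0∞ :=
  Matrix.of fun x y => α * w x y / ∑ y' : V, w x y'

lemma bellmanFord_eq_sum {V : Type*} [Fintype V] [DecidableEq V]
    (A : Matrix V V ℝ≥0∞) (t : ℕ) :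
    bellmanFord A t = ∑ k ∈ Finset.range (t + 1), A ^ k := by
  induction t with
  | zero => simp [bellmanFord]
  | succ t ih =>
    rw [bellmanFord, ih, Finset.sum_mul]
    have : ∀ k ∈ Finset.range (t + 1), A ^ k * A = A ^ (k + 1) := by
      intro k _; rw [pow_succ]
    rw [Finset.sum_congr rfl this, Finset.sum_range_succ' (fun k => A ^ k) (t + 1)]
    simp [add_comm]

theorem bellmanFord_solves_ppr {V : Type*} [Fintype V] [DecidableEq V]
    (w : Matrix V V ℝ≥0∞) (α : ℝ≥0∞)
    (hpos : ∀ x : V, 0 < ∑ y : V, w x y) (hfin : ∀ x : V, ∑ y : V, w x y < ∞)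
    (u v : V) :
    (⨆ t : ℕ, bellmanFord (pprMatrix w α) t u v) =
      (if u = v then 1 else 0) + ∑' t : ℕ, (pprMatrix w α ^ (t + 1)) u v := by
  set P := pprMatrix w α
  have key : (⨆ t : ℕ, bellmanFord P t u v) = ∑' k : ℕ, (P ^ k) u v := by
    rw [ENNReal.tsum_eq_iSup_nat]
    have hmono : Monotone fun n => ∑ k ∈ Finset.range n, (P ^ k) u v := by
      intro a b hab
      exact Finset.sum_le_sum_of_subset (Finset.range_subset_range.mpr hab)
    apply le_antisymm
    · refine iSup_le fun t => ?_
      rw [bellmanFord_eq_sum]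
      have : (∑ k ∈ Finset.range (t + 1), P ^ k) u v
          = ∑ k ∈ Finset.range (t + 1), (P ^ k) u v := by
        simp [Matrix.sum_apply]
      rw [this]
      exact le_iSup (fun n => ∑ k ∈ Finset.range n, (P ^ k) u v) (t + 1)
    · refine iSup_le fun n => ?_
      calc ∑ k ∈ Finset.range n, (P ^ k) u v
          ≤ ∑ k ∈ Finset.range (n + 1), (P ^ k) u v := hmono (Nat.le_succ n)
        _ = (∑ k ∈ Finset.range (n + 1), P ^ k) u v := by simp [Matrix.sum_apply]
        _ = bellmanFord P n u v := by rw [bellmanFord_eq_sum]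
        _ ≤ ⨆ t : ℕ, bellmanFord P t u v := le_iSup (fun t => bellmanFord P t u v) n
  rw [key, tsum_eq_zero_add' ENNReal.summable]
  simp [Matrix.one_apply]
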